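/- Let n ≥ 3 and W the n × n Wielandt matrix. For every u ∈ {1,...,n-1}, the entry (W^{n^2-3n+2}) u (n-1) is positive, while (W^{n^2-3n+2}) n (n-1) = 0. Consequently the set S_{n^2-3n+2}(W, n-1) = { u : (W^{n^2-3n+2}) u (n-1) > 0 } equals {1,...,n-1}. -/

import Mathlib

/-- The `n × n` Wielandt matrix: `W i j = 1` iff (`i ≥ 2` and `j = i - 1`) or
(`i = 1` and `j ∈ {n-1, n}`), written here with 0-based indexing via `Fin n`. -/
def wielandt (n : ℕ) : Matrix (Fin n) (Fin n) ℕ := fun i j =>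
  if (1 ≤ i.val ∧ j.val + 1 = i.val) ∨ (i.val = 0 ∧ (j.val = n - 2 ∨ j.val = n - 1))
  then 1 else 0

namespace WAux

lemma pos_mul {n : ℕ} (A : Matrix (Fin n) (Fin n) ℕ) {p q : ℕ} {u v w : Fin n}
    (h1 : 0 < (A ^ p) u v) (h2 : 0 < (A ^ q) v w) : 0 < (A ^ (p + q)) u w := by
  rw [pow_add, Matrix.mul_apply]
  calc 0 < (A ^ p) u v * (A ^ q) v w := Nat.mul_pos h1 h2
    _ ≤ ∑ x, (A ^ p) u x * (A ^ q) x w :=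
      Finset.single_le_sum (f := fun x => (A ^ p) u x * (A ^ q) x w)
        (fun i _ => Nat.zero_le _) (Finset.mem_univ v)

lemma pos_cast {n : ℕ} (A : Matrix (Fin n) (Fin n) ℕ) {p q : ℕ} {u v u' v' : Fin n}
    (h : 0 < (A ^ p) u v) (hpq : p = q) (hu : u = u') (hv : v = v') :
    0 < (A ^ q) u' v' := by subst hpq; subst hu; subst hv; exact h

lemma descent {n : ℕ} (hn : 3 ≤ n) :
    ∀ d u : ℕ, (hu : u < n) → d ≤ u →
      0 < (wielandt n ^ d) ⟨u, hu⟩ ⟨u - d, by omega⟩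
  | 0, u, hu, _ => by
      have : (⟨u, hu⟩ : Fin n) = ⟨u - 0, by omega⟩ := by ext; simp
      rw [pow_zero, this, Matrix.one_apply_eq]
      norm_num
  | (d+1), u, hu, hd => by
      have h1 := descent hn d u hu (by omega)
      have hstep : 0 < (wielandt n ^ 1) (⟨u - d, by omega⟩ : Fin n) ⟨u - (d+1), by omega⟩ := by
        rw [pow_one]
        simp only [wielandt]
        split
        · norm_num
        · omega
      exact pos_cast _ (pos_mul _ h1 hstep) (by omega) rfl rfl

lemma edge01 {n : ℕ} (hn : 3 ≤ n) :
    0 < (wielandt n ^ 1) (⟨0, by omega⟩ : Fin n) ⟨n - 1, Nat.sub_lt (by omega) (by omega)⟩ := by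
  rw [pow_one]; simp only [wielandt]; split
  · norm_num
  · next h => refine absurd ?_ h; simp; try omega

lemma edge02 {n : ℕ} (hn : 3 ≤ n) :
    0 < (wielandt n ^ 1) (⟨0, by omega⟩ : Fin n) ⟨n - 2, Nat.sub_lt (by omega) (by omega)⟩ := by
  rw [pow_one]; simp only [wielandt]; split
  · norm_num
  · next h => refine absurd ?_ h; simp; try omega

lemma edge12 {n : ℕ} (hn : 3 ≤ n) :
    0 < (wielandt n ^ 1) (⟨n - 1, Nat.sub_lt (by omega) (by omega)⟩ : Fin n) ⟨n - 2, Nat.sub_lt (by omega) (by omega)⟩ := by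
  rw [pow_one]; simp only [wielandt]; split
  · norm_num
  · next h => refine absurd ?_ h; simp; try omega

lemma cycn {n : ℕ} (hn : 3 ≤ n) :
    0 < (wielandt n ^ n) (⟨0, by omega⟩ : Fin n) ⟨0, by omega⟩ := by
  have h2 := descent hn (n-1) (n-1) (by omega) le_rfl
  exact pos_cast _ (pos_mul _ (edge01 hn) h2) (by omega) rfl (by ext; simp)

lemma cycn1 {n : ℕ} (hn : 3 ≤ n) :
    0 < (wielandt n ^ (n-1)) (⟨0, by omega⟩ : Fin n) ⟨0, by omega⟩ := by
  have h2 := descent hn (n-2) (n-2) (by omega) le_rfl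
  exact pos_cast _ (pos_mul _ (edge02 hn) h2) (by omega) rfl (by ext; simp)

lemma cyc_iter {n : ℕ} (A : Matrix (Fin n) (Fin n) ℕ) (p : ℕ) (i : Fin n)
    (h : 0 < (A ^ p) i i) : ∀ c, 0 < (A ^ (c * p)) i i
  | 0 => by rw [Nat.zero_mul, pow_zero, Matrix.one_apply_eq]; norm_num
  | (c+1) => by
      exact pos_cast _ (pos_mul _ (cyc_iter A p i h c) h) (by ring) rfl rfl

end WAux

variable {n : ℕ}

lemma nsq (hn : 3 ≤ n) : n ^ 2 - 3 * n + 2 = (n - 1) * (n - 2) := by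
  obtain ⟨m, rfl⟩ : ∃ m, n = m + 3 := ⟨n - 3, by omega⟩
  have e1 : (m + 3) ^ 2 = m * m + 6 * m + 9 := by ring
  have e2 : (m + 3 - 1) * (m + 3 - 2) = m * m + 3 * m + 2 := by
    have : m + 3 - 1 = m + 2 := rfl
    have h2 : m + 3 - 2 = m + 1 := rfl
    rw [this, h2]; ring
  rw [e1, e2]
  generalize m * m = q
  omega

lemma no_rep {a b ε : ℕ} (hn : 3 ≤ n) (hε : 1 ≤ ε) (hε2 : ε ≤ 2)
    (h : (n - 1) * (n - 2) = (n - 1) + ε + a * n + b * (n - 1)) : False := by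
  obtain ⟨p, rfl⟩ : ∃ p, n = p + 3 := ⟨n - 3, by omega⟩
  have h1 : p + 3 - 1 = p + 2 := rfl
  have h2 : p + 3 - 2 = p + 1 := rfl
  rw [h1, h2] at h
  rcases le_or_gt (p + 1) (1 + a + b) with hc | hc
  · have h3 : (p + 2) * (p + 1) ≤ (p + 2) * (1 + a + b) := Nat.mul_le_mul_left _ hc
    nlinarith
  · obtain ⟨c, rfl⟩ : ∃ c, p = a + b + c + 1 := ⟨p - (a + b + 1), by omega⟩
    nlinarith

lemma idzero (hn : 3 ≤ n) : (n - 3) * n + 1 + 1 = n ^ 2 - 3 * n + 2 := by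
  obtain ⟨m, rfl⟩ : ∃ m, n = m + 3 := ⟨n - 3, by omega⟩
  have h0 : m + 3 - 3 = m := rfl
  have e1 : m * (m + 3) = m * m + 3 * m := by ring
  have e2 : (m + 3) ^ 2 = m * m + 6 * m + 9 := by ring
  rw [h0, e1, e2]
  generalize m * m = q
  omega

lemma idpos {u : ℕ} (hn : 3 ≤ n) (h1 : 1 ≤ u) (h2 : u ≤ n - 2) :
    u + (n - 2 - u) * n + (u - 1) * (n - 1) + 1 = n ^ 2 - 3 * n + 2 := by
  obtain ⟨e, rfl⟩ : ∃ e, u = e + 1 := ⟨u - 1, by omega⟩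
  obtain ⟨d, rfl⟩ : ∃ d, n = e + d + 3 := ⟨n - e - 3, by omega⟩
  have h3 : e + d + 3 - 2 - (e + 1) = d := by omega
  have h4 : e + 1 - 1 = e := rfl
  have h5 : e + d + 3 - 1 = e + d + 2 := by omega
  rw [h3, h4, h5]
  have e1 : d * (e + d + 3) = d * e + d * d + 3 * d := by ring
  have e2 : e * (e + d + 2) = e * e + d * e + 2 * e := by ring
  have e3 : (e + d + 3) ^ 2 = e * e + d * d + 2 * (d * e) + 6 * e + 6 * d + 9 := by ring
  rw [e1, e2, e3]
  generalize d * e = q1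
  generalize d * d = q2
  generalize e * e = q3
  omega

lemma exists_pos {n : ℕ} (k : ℕ) (u v : Fin n)
    (h : 0 < (wielandt n ^ (k + 1)) u v) :
    ∃ w, 0 < wielandt n u w ∧ 0 < (wielandt n ^ k) w v := by
  rw [pow_succ', Matrix.mul_apply] at h
  by_contra hc
  push_neg at hc
  have hz : ∑ w, wielandt n u w * (wielandt n ^ k) w v = 0 :=
    Finset.sum_eq_zero (fun w _ => by
      rcases Nat.eq_zero_or_pos (wielandt n u w) with h0 | h0
      · simp [h0]
      · have h2 : (wielandt n ^ k) w v = 0 := by have := hc w h0; omega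
        rw [h2, Nat.mul_zero])
  rw [hz] at h
  exact absurd h (lt_irrefl 0)

lemma char {n : ℕ} (hn : 3 ≤ n) : ∀ (k : ℕ) (u : Fin n),
    0 < (wielandt n ^ k) u ⟨n - 2, Nat.sub_lt (by omega) (by omega)⟩ →
    (u.val = n - 2 ∧ k = 0) ∨ (u.val = n - 1 ∧ k = 1) ∨
      ∃ a b ε, (1 ≤ ε ∧ ε ≤ 2) ∧ k = u.val + ε + a * n + b * (n - 1)
  | 0, u, h => by
      left
      rw [pow_zero] at h
      have : u = ⟨n - 2, by omega⟩ := by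
        by_contra hne
        rw [Matrix.one_apply_ne hne] at h
        omega
      exact ⟨by rw [this], rfl⟩
  | (k+1), u, h => by
      obtain ⟨w, hw1, hw2⟩ := exists_pos k u _ h
      have hcond : (1 ≤ u.val ∧ w.val + 1 = u.val) ∨
          (u.val = 0 ∧ (w.val = n - 2 ∨ w.val = n - 1)) := by
        by_contra hcc
        simp only [wielandt, if_neg hcc] at hw1
        omega
      have IH := char hn k w hw2
      rcases hcond with ⟨hu1, huw⟩ | ⟨hu0, hw⟩
      · -- u ≥ 1, w = u - 1
        rcases IH with ⟨hwv, hk⟩ | ⟨hwv, hk⟩ | ⟨a, b, ε, hε, hk⟩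
        · -- w = n-2, k = 0 : u = n-1, k+1 = 1
          right; left; omega
        · -- w = n-1 : u = n, impossible
          exact absurd u.isLt (by omega)
        · right; right
          refine ⟨a, b, ε, hε, ?_⟩
          generalize a * n = A at hk ⊢
          generalize b * (n - 1) = B at hk ⊢
          omega
      · rcases hw with hw2' | hw2'
        · -- u = 0, w = n-2
          rcases IH with ⟨hwv, hk⟩ | ⟨hwv, hk⟩ | ⟨a, b, ε, hε, hk⟩
          · right; right; exact ⟨0, 0, 1, by omega, by omega⟩
          · omega
          · right; right
            refine ⟨a, b + 1, ε, hε, ?_⟩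
            have hb : (b + 1) * (n - 1) = b * (n - 1) + (n - 1) := by ring
            generalize a * n = A at hk ⊢
            generalize (b + 1) * (n - 1) = B2 at hb ⊢
            generalize b * (n - 1) = B at hb hk
            omega
        · -- u = 0, w = n-1
          rcases IH with ⟨hwv, hk⟩ | ⟨hwv, hk⟩ | ⟨a, b, ε, hε, hk⟩
          · omega
          · right; right; exact ⟨0, 0, 2, by omega, by omega⟩
          · right; right
            refine ⟨a + 1, b, ε, hε, ?_⟩
            have ha : (a + 1) * n = a * n + n := by ring
            generalize b * (n - 1) = B at hk ⊢
            generalize (a + 1) * n = A2 at ha ⊢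
            generalize a * n = A at ha hk
            omega

/-- In the `(n^2-3n+2)`-th power of the Wielandt matrix, the column `n-1` entries are
positive at every row `u < n-1`, zero at row `n`, and the support set equals `{1,...,n-1}`. -/
theorem wielandt_pow_col_partial (n : ℕ) (hn : 3 ≤ n) :
    (∀ u : Fin n, u.val < n - 1 →
        0 < (wielandt n ^ (n ^ 2 - 3 * n + 2)) u ⟨n - 2, by omega⟩) ∧
    (wielandt n ^ (n ^ 2 - 3 * n + 2)) ⟨n - 1, by omega⟩ ⟨n - 2, by omega⟩ = 0 ∧
    {u : Fin n | 0 < (wielandt n ^ (n ^ 2 - 3 * n + 2)) u ⟨n - 2, by omega⟩} =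
      {u : Fin n | u.val < n - 1} := by
  have hpos : ∀ u : Fin n, u.val < n - 1 →
      0 < (wielandt n ^ (n ^ 2 - 3 * n + 2)) u ⟨n - 2, by omega⟩ := by
    intro u hu
    rcases Nat.eq_zero_or_pos u.val with h0 | h1
    · have c1 := WAux.cyc_iter (wielandt n) n ⟨0, by omega⟩ (WAux.cycn hn) (n - 3)
      have c2 := WAux.pos_mul _ c1 (WAux.edge01 hn)
      have c3 := WAux.pos_mul _ c2 (WAux.edge12 hn)
      exact WAux.pos_cast _ c3 (idzero hn) (Fin.ext h0.symm) rfl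
    · have hd := WAux.descent hn u.val u.val u.isLt le_rfl
      have hd' := WAux.pos_cast (wielandt n) hd rfl (Fin.ext rfl)
        (Fin.ext (Nat.sub_self u.val) : (⟨u.val - u.val, by omega⟩ : Fin n) = ⟨0, by omega⟩)
      have c1 := WAux.cyc_iter (wielandt n) n ⟨0, by omega⟩ (WAux.cycn hn) (n - 2 - u.val)
      have c2 := WAux.cyc_iter (wielandt n) (n - 1) ⟨0, by omega⟩ (WAux.cycn1 hn) (u.val - 1)
      have m1 := WAux.pos_mul _ hd' c1
      have m2 := WAux.pos_mul _ m1 c2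
      have m3 := WAux.pos_mul _ m2 (WAux.edge02 hn)
      exact WAux.pos_cast _ m3 (idpos hn h1 (by omega)) (Fin.ext rfl) rfl
  have hzero : ∀ u : Fin n, u.val = n - 1 →
      (wielandt n ^ (n ^ 2 - 3 * n + 2)) u ⟨n - 2, by omega⟩ = 0 := by
    intro u huv
    by_contra hne
    have hp := Nat.pos_of_ne_zero hne
    rcases char hn _ _ hp with ⟨h1, h2⟩ | ⟨h1, h2⟩ | ⟨a, b, ε, hε, hk⟩
    · omega
    · have h3 : n ^ 2 - 3 * n + 2 = (n - 1) * (n - 2) := nsq hn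
      have h4 : 2 * 1 ≤ (n - 1) * (n - 2) := Nat.mul_le_mul (by omega) (by omega)
      generalize (n - 1) * (n - 2) = K at h3 h4
      omega
    · rw [nsq hn, huv] at hk
      exact no_rep hn hε.1 hε.2 hk
  refine ⟨hpos, hzero _ rfl, ?_⟩
  ext u
  simp only [Set.mem_setOf_eq]
  constructor
  · intro hu
    have hlt := u.isLt
    by_contra hc
    exact absurd (hzero u (by omega)) (by omega)
  · exact hpos u
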